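/- Estimate for the critical-mode Duhamel operator: let r ≥ 0, k₀ > 0, T > 0, ε > 0 and η̃ ≥ 2. Let a : ℝ → ℂ be measurable with Re a(k) ≤ ε² for all |k| ≤ k₀. Let f : [0,T] × ℝ → ℂ be such that t ↦ f(t,k) is continuous for each k, f(t,k) = 0 whenever |k| > k₀, and M := sup_{t∈[0,T]} e^{-η̃ε²t} ‖f(t,·)‖_{L^∞_0} < ∞. Then R(t,k) := ε² ∫₀^t e^{a(k)(t−τ)} f(τ,k) dτ satisfies sup_{t∈[0,T]} e^{-η̃ε²t} ‖R(t,·)‖_{L^∞_r} ≤ (1+k₀²)^{r/2} (η̃ − 1)^{-1} M. -/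

import Mathlib

set_option maxHeartbeats 1000000


open MeasureTheory
open scoped ENNReal

/-- The weighted sup-norm `‖û‖_{L^∞_r} = sup_k |û(k)| (1+|k|²)^{r/2}`, valued in `ℝ≥0∞`. -/
noncomputable def wnorm (r : ℝ) (u : ℝ → ℂ) : ℝ≥0∞ :=
  ⨆ k : ℝ, ENNReal.ofReal (‖u k‖ * (1 + |k| ^ 2) ^ (r / 2))

/-- estimate for the critical-mode Duhamel operator.  If `Re a(k) ≤ ε²` on
the compact critical support `|k| ≤ k₀`, `f(t,·)` is supported there, and
`M = sup_{t∈[0,T]} e^{-η̃ε²t} ‖f(t,·)‖_{L^∞_0}`, then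
`R(t,k) = ε² ∫₀ᵗ e^{a(k)(t−τ)} f(τ,k) dτ` satisfies
`sup_{t∈[0,T]} e^{-η̃ε²t} ‖R(t,·)‖_{L^∞_r} ≤ (1+k₀²)^{r/2} (η̃−1)⁻¹ M`. -/
theorem critical_mode_duhamel_estimate (r k₀ T ε ηt : ℝ)
    (hr : 0 ≤ r) (hk₀ : 0 < k₀) (hT : 0 < T) (hε : 0 < ε) (hηt : 2 ≤ ηt)
    (a : ℝ → ℂ) (ha_meas : Measurable a)
    (ha : ∀ k : ℝ, |k| ≤ k₀ → (a k).re ≤ ε ^ 2)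
    (f : ℝ → ℝ → ℂ)
    (hf_cont : ∀ k : ℝ, Continuous fun t => f t k)
    (hf_supp : ∀ t k : ℝ, k₀ < |k| → f t k = 0)
    (hM : (⨆ t ∈ Set.Icc (0 : ℝ) T,
        ENNReal.ofReal (Real.exp (-(ηt * ε ^ 2) * t)) * wnorm 0 (f t)) < ⊤) :
    (⨆ t ∈ Set.Icc (0 : ℝ) T,
        ENNReal.ofReal (Real.exp (-(ηt * ε ^ 2) * t)) *
          wnorm r (fun k => (ε ^ 2 : ℂ) *
            ∫ τ in (0 : ℝ)..t, Complex.exp (a k * ((t - τ : ℝ) : ℂ)) * f τ k)) ≤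
      ENNReal.ofReal ((1 + k₀ ^ 2) ^ (r / 2) * (ηt - 1)⁻¹) *
        (⨆ t ∈ Set.Icc (0 : ℝ) T,
          ENNReal.ofReal (Real.exp (-(ηt * ε ^ 2) * t)) * wnorm 0 (f t)) := by
  set Mval : ℝ≥0∞ := ⨆ t ∈ Set.Icc (0 : ℝ) T,
      ENNReal.ofReal (Real.exp (-(ηt * ε ^ 2) * t)) * wnorm 0 (f t) with hMval
  have hMne : Mval ≠ ⊤ := hM.ne
  set Mr : ℝ := Mval.toReal with hMr
  have hMr0 : 0 ≤ Mr := ENNReal.toReal_nonneg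
  have hη1 : (0:ℝ) < ηt - 1 := by linarith
  -- pointwise bound on f
  have hfb : ∀ τ ∈ Set.Icc (0:ℝ) T, ∀ k : ℝ,
      ‖f τ k‖ ≤ Real.exp (ηt * ε ^ 2 * τ) * Mr := by
    intro τ hτ k
    have h0 : ENNReal.ofReal (Real.exp (-(ηt * ε ^ 2) * τ)) * ENNReal.ofReal ‖f τ k‖
        ≤ Mval := by
      refine le_trans ?_ (le_iSup₂_of_le τ hτ le_rfl)
      gcongr
      refine le_iSup_of_le k ?_
      simp [Real.rpow_zero]
    rw [← ENNReal.ofReal_mul (Real.exp_nonneg _)] at h0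
    have h2 : Real.exp (-(ηt * ε ^ 2) * τ) * ‖f τ k‖ ≤ Mr := by
      have := ENNReal.toReal_mono hMne h0
      rwa [ENNReal.toReal_ofReal (by positivity)] at this
    have h3 := mul_le_mul_of_nonneg_left h2 (Real.exp_nonneg (ηt * ε ^ 2 * τ))
    rw [← mul_assoc, ← Real.exp_add] at h3
    simpa using h3
  -- main pointwise estimate
  have key : ∀ t ∈ Set.Icc (0:ℝ) T, ∀ k : ℝ,
      Real.exp (-(ηt * ε ^ 2) * t) *
        (‖(ε ^ 2 : ℂ) * ∫ τ in (0:ℝ)..t, Complex.exp (a k * ((t - τ : ℝ) : ℂ)) * f τ k‖ *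
          (1 + |k| ^ 2) ^ (r / 2))
      ≤ (1 + k₀ ^ 2) ^ (r / 2) * (ηt - 1)⁻¹ * Mr := by
    intro t ht k
    obtain ⟨ht0, htT⟩ := ht
    by_cases hk : k₀ < |k|
    · have : ∀ τ : ℝ, Complex.exp (a k * ((t - τ : ℝ) : ℂ)) * f τ k = 0 := by
        intro τ; rw [hf_supp τ k hk, mul_zero]
      simp only [this, intervalIntegral.integral_zero, mul_zero, norm_zero, zero_mul, mul_zero]
      positivity
    · push_neg at hk
      -- bound the integral
      have hbound : ‖∫ τ in (0:ℝ)..t, Complex.exp (a k * ((t - τ : ℝ) : ℂ)) * f τ k‖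
          ≤ ∫ τ in (0:ℝ)..t,
              Real.exp (ε ^ 2 * (t - τ)) * (Real.exp (ηt * ε ^ 2 * τ) * Mr) := by
        have hg : IntervalIntegrable
            (fun τ => Real.exp (ε ^ 2 * (t - τ)) * (Real.exp (ηt * ε ^ 2 * τ) * Mr))
            volume 0 t := by
          apply Continuous.intervalIntegrable
          exact ((Real.continuous_exp.comp ((continuous_const.mul
            (continuous_const.sub continuous_id)))).mul
            ((Real.continuous_exp.comp (continuous_const.mul continuous_id)).mul
              continuous_const))
        have h := intervalIntegral.norm_integral_le_of_norm_le
          (f := fun τ => Complex.exp (a k * ((t - τ : ℝ) : ℂ)) * f τ k)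
          (g := fun τ => Real.exp (ε ^ 2 * (t - τ)) * (Real.exp (ηt * ε ^ 2 * τ) * Mr))
          (μ := volume) (a := 0) (b := t) ht0 ?_ hg
        · exact h
        · refine Filter.Eventually.of_forall ?_
          intro τ hτ
          obtain ⟨hτ0, hτt⟩ := hτ
          simp only [norm_mul, Complex.norm_exp]
          have hre : (a k * ((t - τ : ℝ) : ℂ)).re = (a k).re * (t - τ) := by
            simp [Complex.mul_re]
          rw [hre]
          have h1 : Real.exp ((a k).re * (t - τ)) ≤ Real.exp (ε ^ 2 * (t - τ)) :=
            Real.exp_le_exp.mpr (mul_le_mul_of_nonneg_right (ha k hk) (by linarith))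
          have h2 : ‖f τ k‖ ≤ Real.exp (ηt * ε ^ 2 * τ) * Mr :=
            hfb τ ⟨hτ0.le, hτt.trans htT⟩ k
          exact mul_le_mul h1 h2 (norm_nonneg _) (Real.exp_nonneg _)
      -- compute the integral
      set c : ℝ := (ηt - 1) * ε ^ 2 with hc
      have hcpos : 0 < c := by positivity
      have hint : (∫ τ in (0:ℝ)..t,
            Real.exp (ε ^ 2 * (t - τ)) * (Real.exp (ηt * ε ^ 2 * τ) * Mr))
          = Mr * Real.exp (ε ^ 2 * t) * ((Real.exp (c * t) - 1) / c) := by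
        have heq : ∀ τ : ℝ, Real.exp (ε ^ 2 * (t - τ)) * (Real.exp (ηt * ε ^ 2 * τ) * Mr)
            = (Mr * Real.exp (ε ^ 2 * t)) * Real.exp (τ * c) := by
          intro τ
          have h4 : Real.exp (ε ^ 2 * (t - τ)) * Real.exp (ηt * ε ^ 2 * τ)
              = Real.exp (ε ^ 2 * t) * Real.exp (τ * c) := by
            rw [← Real.exp_add, ← Real.exp_add]
            congr 1
            rw [hc]; ring
          rw [← mul_assoc, h4]; ring
        simp_rw [heq]
        rw [intervalIntegral.integral_const_mul,
          intervalIntegral.integral_comp_mul_right Real.exp hcpos.ne']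
        rw [integral_exp, smul_eq_mul, zero_mul, Real.exp_zero]
        rw [mul_comm t c]
        ring
      -- assemble
      have hεnorm : ‖(ε ^ 2 : ℂ)‖ = ε ^ 2 := by
        rw [show ((ε:ℂ) ^ 2 : ℂ) = ((ε ^ 2 : ℝ) : ℂ) by push_cast; ring,
          Complex.norm_real, Real.norm_eq_abs, abs_of_nonneg (by positivity)]
      have hstep : ‖(ε ^ 2 : ℂ) * ∫ τ in (0:ℝ)..t,
            Complex.exp (a k * ((t - τ : ℝ) : ℂ)) * f τ k‖
          ≤ ε ^ 2 * (Mr * Real.exp (ε ^ 2 * t) * ((Real.exp (c * t) - 1) / c)) := by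
        rw [norm_mul, hεnorm]
        exact mul_le_mul_of_nonneg_left (hbound.trans_eq hint) (by positivity)
      -- scalar estimate
      have hscalar : Real.exp (-(ηt * ε ^ 2) * t) *
          (ε ^ 2 * (Real.exp (ε ^ 2 * t) * ((Real.exp (c * t) - 1) / c)))
          ≤ (ηt - 1)⁻¹ := by
        have hE1 : Real.exp (-(ηt * ε ^ 2) * t) * Real.exp (ε ^ 2 * t) * Real.exp (c * t)
            = Real.exp ((1 - ηt) * ε ^ 2 * t + c * t) := by
          rw [← Real.exp_add, ← Real.exp_add]; ring_nf
        have hE2 : (1 - ηt) * ε ^ 2 * t + c * t = 0 := by rw [hc]; ring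
        rw [hE2, Real.exp_zero] at hE1
        have hE3 : 0 < Real.exp (-(ηt * ε ^ 2) * t) * Real.exp (ε ^ 2 * t) := by positivity
        have hεc : ε ^ 2 / c = (ηt - 1)⁻¹ := by
          rw [hc]; field_simp
        have : Real.exp (-(ηt * ε ^ 2) * t) *
            (ε ^ 2 * (Real.exp (ε ^ 2 * t) * ((Real.exp (c * t) - 1) / c)))
            = (ε ^ 2 / c) * (Real.exp (-(ηt * ε ^ 2) * t) * Real.exp (ε ^ 2 * t)
                * Real.exp (c * t)
              - Real.exp (-(ηt * ε ^ 2) * t) * Real.exp (ε ^ 2 * t)) := by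
          field_simp
        rw [this, hE1, hεc]
        have : 1 - Real.exp (-(ηt * ε ^ 2) * t) * Real.exp (ε ^ 2 * t) ≤ 1 := by linarith
        calc (ηt - 1)⁻¹ * (1 - Real.exp (-(ηt * ε ^ 2) * t) * Real.exp (ε ^ 2 * t))
            ≤ (ηt - 1)⁻¹ * 1 := by
              apply mul_le_mul_of_nonneg_left this (by positivity)
          _ = (ηt - 1)⁻¹ := mul_one _
      -- weight estimate
      have hw : (1 + |k| ^ 2) ^ (r / 2) ≤ (1 + k₀ ^ 2) ^ (r / 2) := by
        apply Real.rpow_le_rpow (by positivity) _ (by positivity)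
        have : |k| ^ 2 ≤ k₀ ^ 2 := by
          apply pow_le_pow_left₀ (abs_nonneg k) hk
        linarith
      calc Real.exp (-(ηt * ε ^ 2) * t) *
            (‖(ε ^ 2 : ℂ) * ∫ τ in (0:ℝ)..t,
              Complex.exp (a k * ((t - τ : ℝ) : ℂ)) * f τ k‖ * (1 + |k| ^ 2) ^ (r / 2))
          ≤ Real.exp (-(ηt * ε ^ 2) * t) *
            ((ε ^ 2 * (Mr * Real.exp (ε ^ 2 * t) * ((Real.exp (c * t) - 1) / c)))
              * (1 + k₀ ^ 2) ^ (r / 2)) := by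
            apply mul_le_mul_of_nonneg_left _ (Real.exp_nonneg _)
            apply mul_le_mul hstep hw (by positivity)
            have h1 : 0 ≤ Real.exp (c * t) - 1 := by
              have : (1:ℝ) = Real.exp 0 := (Real.exp_zero).symm
              rw [this]
              have : (0:ℝ) ≤ c * t := by positivity
              linarith [Real.exp_le_exp.mpr this]
            positivity
        _ = (1 + k₀ ^ 2) ^ (r / 2) * (Real.exp (-(ηt * ε ^ 2) * t) *
              (ε ^ 2 * (Real.exp (ε ^ 2 * t) * ((Real.exp (c * t) - 1) / c)))) * Mr := by
            ring
        _ ≤ (1 + k₀ ^ 2) ^ (r / 2) * (ηt - 1)⁻¹ * Mr := by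
            apply mul_le_mul_of_nonneg_right _ hMr0
            exact mul_le_mul_of_nonneg_left hscalar (by positivity)
  -- assemble the final bound
  refine iSup₂_le fun t ht => ?_
  rw [wnorm, ENNReal.mul_iSup]
  refine iSup_le fun k => ?_
  rw [← ENNReal.ofReal_mul (Real.exp_nonneg _)]
  refine le_trans (ENNReal.ofReal_le_ofReal (key t ht k)) ?_
  rw [ENNReal.ofReal_mul (show (0:ℝ) ≤ (1 + k₀ ^ 2) ^ (r / 2) * (ηt - 1)⁻¹ by positivity)]
  gcongr
  exact ENNReal.ofReal_toReal_le
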